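/- arXiv:2304.00419 — 3 statements merged into one kernel-verified Lean document; each statement's English description precedes it below -/
import Mathlib

section
/- Let X = (x_1,...,x_n) ⊆ [0,1]^d, let F be a finite set of k-tuples of centers in [0,1]^d with |F| ≤ 2^{qkd} for an integer constant q, and consider the process: C_1 ∈ F arbitrary; independent batches B_1, B_2, ..., each consisting of b independent uniform samples from the entries of X; C_{i+1} = U(C_i, B_i) for an arbitrary function U : F × ([0,1]^d)^b → F; the process stops at the first index T with f_{B_T}(C_T) − f_{B_T}(C_{T+1}) < ε. There exist absolute constants c_1, c_2 > 0 such that if b ≥ c_1·(d/ε)²·(qkd + log(n·d/ε)), then Pr[T ≤ 2d/ε + 1] ≥ 1 − c_2/n. -/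
open scoped BigOperators
open MeasureTheory

/-- `kmCost C x = min_{C ∈ 𝒞} ‖x − C‖²`. -/
noncomputable def kmCost {d k : ℕ} (C : Fin k → EuclideanSpace ℝ (Fin d))
    (x : EuclideanSpace ℝ (Fin d)) : ℝ :=
  ⨅ j, ‖x - C j‖ ^ 2

/-- `kmCostTuple C A = (1/ℓ) Σ_{i} f_{a_i}(𝒞)`. -/
noncomputable def kmCostTuple {d k m : ℕ} (C : Fin k → EuclideanSpace ℝ (Fin d))
    (A : Fin m → EuclideanSpace ℝ (Fin d)) : ℝ :=
  ((m : ℝ))⁻¹ * ∑ i : Fin m, kmCost C (A i)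

open MeasureTheory ProbabilityTheory Real
open scoped ENNReal NNReal

lemma exp_quad {u : ℝ} (hu : |u| ≤ 1) : Real.exp u ≤ 1 + u + u ^ 2 := by
  have h := Real.exp_bound hu (by norm_num : (0:ℕ) < 2)
  have hs : ∑ m ∈ Finset.range 2, u ^ m / m.factorial = 1 + u := by
    simp [Finset.sum_range_succ]
  rw [hs] at h
  have h2 : Real.exp u - (1 + u) ≤ |u| ^ 2 * (((2:ℕ).succ : ℝ) / ((2:ℕ).factorial * 2)) :=
    (le_abs_self _).trans h
  have hfac : (((2:ℕ).succ : ℝ) / ((2:ℕ).factorial * 2)) = 3/4 := by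
    norm_num [Nat.factorial]
  rw [hfac, sq_abs] at h2
  nlinarith [sq_nonneg u]

lemma kmCost_nonneg' {d k : ℕ} (C : Fin k → EuclideanSpace ℝ (Fin d))
    (x : EuclideanSpace ℝ (Fin d)) : 0 ≤ ⨅ j, ‖x - C j‖ ^ 2 :=
  Real.iInf_nonneg fun j => sq_nonneg _

lemma norm_sq_le {d : ℕ} (x y : EuclideanSpace ℝ (Fin d))
    (hx : ∀ j, x j ∈ Set.Icc (0:ℝ) 1) (hy : ∀ j, y j ∈ Set.Icc (0:ℝ) 1) :
    ‖x - y‖ ^ 2 ≤ d := by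
  have h1 : ‖x - y‖ ^ 2 = ∑ i, ‖(x - y) i‖ ^ 2 := by
    rw [EuclideanSpace.norm_eq]
    rw [Real.sq_sqrt (Finset.sum_nonneg fun i _ => sq_nonneg _)]
  rw [h1]
  calc ∑ i, ‖(x - y) i‖ ^ 2 ≤ ∑ _i : Fin d, (1:ℝ) := by
        apply Finset.sum_le_sum
        intro i _
        have : (x - y) i = x i - y i := rfl
        rw [this, Real.norm_eq_abs, sq_abs]
        have hx' := hx i; have hy' := hy i
        simp only [Set.mem_Icc] at hx' hy'
        nlinarith [hx'.1, hx'.2, hy'.1, hy'.2]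
    _ = d := by simp

lemma kmCost_le {d k : ℕ} (hk : 0 < k) (C : Fin k → EuclideanSpace ℝ (Fin d))
    (x : EuclideanSpace ℝ (Fin d))
    (hC : ∀ i j, C i j ∈ Set.Icc (0:ℝ) 1) (hx : ∀ j, x j ∈ Set.Icc (0:ℝ) 1) :
    kmCost C x ≤ d := by
  rw [kmCost]
  have : Nonempty (Fin k) := ⟨⟨0, hk⟩⟩
  refine le_trans (ciInf_le ?_ (Classical.arbitrary (Fin k))) ?_
  · exact (Set.finite_range _).bddBelow
  · exact norm_sq_le x _ hx (hC _)

lemma kmCostTuple_nonneg {d k m : ℕ} (C : Fin k → EuclideanSpace ℝ (Fin d))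
    (A : Fin m → EuclideanSpace ℝ (Fin d)) : 0 ≤ kmCostTuple C A := by
  apply mul_nonneg (by positivity)
  exact Finset.sum_nonneg fun i _ => kmCost_nonneg' C (A i)

lemma kmCostTuple_le {d k m : ℕ} (hk : 0 < k) (C : Fin k → EuclideanSpace ℝ (Fin d))
    (A : Fin m → EuclideanSpace ℝ (Fin d))
    (hC : ∀ i j, C i j ∈ Set.Icc (0:ℝ) 1) (hA : ∀ i j, A i j ∈ Set.Icc (0:ℝ) 1) :
    kmCostTuple C A ≤ d := by
  rcases Nat.eq_zero_or_pos m with hm | hm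
  · subst hm; simp [kmCostTuple]
  rw [kmCostTuple]
  calc ((m:ℝ))⁻¹ * ∑ i : Fin m, kmCost C (A i)
      ≤ ((m:ℝ))⁻¹ * ∑ _i : Fin m, (d:ℝ) := by
        apply mul_le_mul_of_nonneg_left _ (by positivity)
        exact Finset.sum_le_sum fun i _ => kmCost_le hk C (A i) hC (hA i)
    _ = d := by
        rw [Finset.sum_const, Finset.card_univ, Fintype.card_fin, nsmul_eq_mul]
        field_simp

lemma integral_comp_unif {Ω : Type} [MeasurableSpace Ω] (μ : Measure Ω) [IsProbabilityMeasure μ]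
    {n : ℕ} (hn : 0 < n) (W : Ω → Fin n) (hW : Measurable W)
    (hunif : ∀ x, μ {ω | W ω = x} = 1 / n) (h : Fin n → ℝ) :
    ∫ ω, h (W ω) ∂μ = (n : ℝ)⁻¹ * ∑ x, h x := by
  have : IsProbabilityMeasure (μ.map W) := Measure.isProbabilityMeasure_map hW.aemeasurable
  rw [← MeasureTheory.integral_map hW.aemeasurable (measurable_of_finite h).aestronglyMeasurable]
  rw [MeasureTheory.integral_fintype (Integrable.of_finite)]; simp only [Measure.real]
  have hsingle : ∀ x : Fin n, ((μ.map W) {x}).toReal = (n : ℝ)⁻¹ := by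
    intro x
    rw [Measure.map_apply hW (MeasurableSet.singleton x)]
    have : W ⁻¹' {x} = {ω | W ω = x} := rfl
    rw [this, hunif x, one_div]
    rw [ENNReal.toReal_inv]
    simp
  simp_rw [hsingle, smul_eq_mul, ← Finset.mul_sum]

lemma mgf_unif_le {Ω : Type} [MeasurableSpace Ω] (μ : Measure Ω) [IsProbabilityMeasure μ]
    {n : ℕ} (hn : 0 < n) (W : Ω → Fin n) (hW : Measurable W)
    (hunif : ∀ x, μ {ω | W ω = x} = 1 / n) (g : Fin n → ℝ) {B : ℝ} (hB : 0 < B)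
    (hg : ∀ x, g x ∈ Set.Icc 0 B) {l : ℝ} (hl : |l| ≤ 1 / B) :
    mgf (fun ω => g (W ω)) μ l ≤ Real.exp (l * ((n : ℝ)⁻¹ * ∑ x, g x) + l ^ 2 * B ^ 2) := by
  set m : ℝ := (n : ℝ)⁻¹ * ∑ x, g x with hm
  have hm0 : 0 ≤ m := mul_nonneg (by positivity)
    (Finset.sum_nonneg fun x _ => (hg x).1)
  have hmB : m ≤ B := by
    rw [hm]
    calc (n : ℝ)⁻¹ * ∑ x, g x ≤ (n : ℝ)⁻¹ * ∑ _x : Fin n, B := by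
          apply mul_le_mul_of_nonneg_left _ (by positivity)
          exact Finset.sum_le_sum fun x _ => (hg x).2
      _ = B := by
          rw [Finset.sum_const, Finset.card_univ, Fintype.card_fin, nsmul_eq_mul]
          field_simp
  have key : mgf (fun ω => g (W ω)) μ l = (n : ℝ)⁻¹ * ∑ x, Real.exp (l * g x) := by
    rw [mgf]
    exact integral_comp_unif μ hn W hW hunif (fun x => Real.exp (l * g x))
  rw [key]
  -- bound each exponential
  have hperx : ∀ x : Fin n, Real.exp (l * g x) ≤
      Real.exp (l * m) * (1 + l * (g x - m) + (l * (g x - m)) ^ 2) := by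
    intro x
    have habs : |l * (g x - m)| ≤ 1 := by
      rw [abs_mul]
      have h1 : |g x - m| ≤ B := by
        rw [abs_le]
        constructor
        · nlinarith [(hg x).1]
        · nlinarith [(hg x).2]
      calc |l| * |g x - m| ≤ (1 / B) * B := by
            apply mul_le_mul hl h1 (abs_nonneg _) (by positivity)
        _ = 1 := by field_simp
    have := exp_quad habs
    calc Real.exp (l * g x) = Real.exp (l * m) * Real.exp (l * (g x - m)) := by
          rw [← Real.exp_add]; ring_nf
      _ ≤ Real.exp (l * m) * (1 + l * (g x - m) + (l * (g x - m)) ^ 2) := by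
          apply mul_le_mul_of_nonneg_left this (Real.exp_pos _).le
  have hsum : (n : ℝ)⁻¹ * ∑ x, Real.exp (l * g x) ≤
      Real.exp (l * m) * (1 + l ^ 2 * B ^ 2) := by
    calc (n : ℝ)⁻¹ * ∑ x, Real.exp (l * g x)
        ≤ (n : ℝ)⁻¹ * ∑ x, Real.exp (l * m) * (1 + l * (g x - m) + (l * (g x - m)) ^ 2) := by
          apply mul_le_mul_of_nonneg_left _ (by positivity)
          exact Finset.sum_le_sum fun x _ => hperx x
      _ = Real.exp (l * m) * (1 + l * ((n : ℝ)⁻¹ * ∑ x, (g x - m)) +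
            l ^ 2 * ((n : ℝ)⁻¹ * ∑ x, (g x - m) ^ 2)) := by
          have hnne : (n : ℝ) ≠ 0 := Nat.cast_ne_zero.mpr hn.ne'
          have e1 : ∀ x : Fin n,
              (n:ℝ)⁻¹ * (Real.exp (l*m) * (1 + l*(g x - m) + (l*(g x - m))^2))
              = (n:ℝ)⁻¹ * Real.exp (l*m)
                + Real.exp (l*m) * (l * ((n:ℝ)⁻¹ * (g x - m)))
                + Real.exp (l*m) * (l^2 * ((n:ℝ)⁻¹ * (g x - m)^2)) := fun x => by ring
          rw [Finset.mul_sum]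
          simp only [e1]
          rw [Finset.sum_add_distrib, Finset.sum_add_distrib,
            Finset.sum_const, Finset.card_univ, Fintype.card_fin, nsmul_eq_mul,
            ← Finset.mul_sum, ← Finset.mul_sum, ← Finset.mul_sum, ← Finset.mul_sum, ← Finset.mul_sum, ← Finset.mul_sum]
          rw [show (n:ℝ) * ((n:ℝ)⁻¹ * Real.exp (l*m)) = Real.exp (l*m) by field_simp]
          ring
      _ ≤ Real.exp (l * m) * (1 + l ^ 2 * B ^ 2) := by
          have hzero : (n : ℝ)⁻¹ * ∑ x, (g x - m) = 0 := by
            rw [Finset.sum_sub_distrib, Finset.sum_const, Finset.card_univ,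
              Fintype.card_fin, nsmul_eq_mul]
            have hnne : (n : ℝ) ≠ 0 := Nat.cast_ne_zero.mpr hn.ne'
            rw [hm]
            field_simp
            ring
          rw [hzero]
          apply mul_le_mul_of_nonneg_left _ (Real.exp_pos _).le
          simp only [mul_zero, add_zero]
          have hvar : (n : ℝ)⁻¹ * ∑ x, (g x - m) ^ 2 ≤ B ^ 2 := by
            calc (n : ℝ)⁻¹ * ∑ x, (g x - m) ^ 2 ≤ (n : ℝ)⁻¹ * ∑ _x : Fin n, B ^ 2 := by
                  apply mul_le_mul_of_nonneg_left _ (by positivity)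
                  apply Finset.sum_le_sum
                  intro x _
                  have h1 : |g x - m| ≤ B := by
                    rw [abs_le]
                    exact ⟨by nlinarith [(hg x).1], by nlinarith [(hg x).2]⟩
                  calc (g x - m) ^ 2 = |g x - m| ^ 2 := (sq_abs _).symm
                    _ ≤ B ^ 2 := by nlinarith [abs_nonneg (g x - m)]
              _ = B ^ 2 := by
                  rw [Finset.sum_const, Finset.card_univ, Fintype.card_fin, nsmul_eq_mul]
                  field_simp
          nlinarith [sq_nonneg l]
  calc (n : ℝ)⁻¹ * ∑ x, Real.exp (l * g x) ≤ Real.exp (l * m) * (1 + l ^ 2 * B ^ 2) := hsum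
    _ ≤ Real.exp (l * m) * Real.exp (l ^ 2 * B ^ 2) := by
        apply mul_le_mul_of_nonneg_left _ (Real.exp_pos _).le
        have := Real.add_one_le_exp (l ^ 2 * B ^ 2)
        linarith
    _ = Real.exp (l * m + l ^ 2 * B ^ 2) := (Real.exp_add _ _).symm

lemma iIndepFun_comp_right {ι ι' Ω β : Type*} [MeasurableSpace Ω] {mβ : MeasurableSpace β}
    {μ : Measure Ω} {f : ι → Ω → β} (h : ProbabilityTheory.iIndepFun (m := fun _ => mβ) f μ)
    {e : ι' → ι} (he : Function.Injective e) :
    ProbabilityTheory.iIndepFun (m := fun _ => mβ) (fun i => f (e i)) μ := by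
  classical
  rw [ProbabilityTheory.iIndepFun_iff] at h ⊢
  intro s f' hf'
  set g : ι → Set Ω := Function.extend e f' (fun _ => Set.univ) with hgdef
  have hge : ∀ i, g (e i) = f' i := fun i => he.extend_apply _ _ _
  have h1 : (⋂ i ∈ s, f' i) = ⋂ j ∈ s.image e, g j := by
    ext ω
    simp only [Set.mem_iInter, Finset.mem_image]
    constructor
    · rintro hω j ⟨i, hi, rfl⟩
      rw [hge]; exact hω i hi
    · intro hω i hi
      rw [← hge i]; exact hω (e i) ⟨i, hi, rfl⟩
  have h2 : ∏ i ∈ s, μ (f' i) = ∏ j ∈ s.image e, μ (g j) := by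
    rw [Finset.prod_image (fun i _ j _ hij => he hij)]
    exact Finset.prod_congr rfl fun i _ => by rw [hge]
  rw [h1, h2]
  apply h (s.image e)
  intro j hj
  rcases Finset.mem_image.mp hj with ⟨i, hi, rfl⟩
  rw [hge]
  exact hf' i hi

lemma batch_dev_bound {Ω : Type} [MeasurableSpace Ω] (μ : Measure Ω) [IsProbabilityMeasure μ]
    {n b : ℕ} (hn : 0 < n) (hb : 0 < b)
    (W : Fin b → Ω → Fin n) (hW : ∀ l, Measurable (W l))
    (hindep : ProbabilityTheory.iIndepFun W μ)
    (hunif : ∀ l x, μ {ω | W l ω = x} = 1 / n)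
    (g : Fin n → ℝ) {B : ℝ} (hB : 0 < B) (hg : ∀ x, g x ∈ Set.Icc 0 B)
    {t : ℝ} (ht : 0 < t) (ht2 : t ≤ 2 * B) :
    μ {ω | t ≤ |(b:ℝ)⁻¹ * ∑ l, g (W l ω) - (n:ℝ)⁻¹ * ∑ x, g x|}
      ≤ ENNReal.ofReal (2 * Real.exp (-(b * t ^ 2) / (4 * B ^ 2))) := by
  set m : ℝ := (n:ℝ)⁻¹ * ∑ x, g x with hmdef
  set Y : Fin b → Ω → ℝ := fun l ω => g (W l ω) with hYdef
  have hYmeas : ∀ l, Measurable (Y l) := fun l => (measurable_of_finite g).comp (hW l)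
  have hYindep : ProbabilityTheory.iIndepFun Y μ :=
    hindep.comp (fun _ => g) (fun _ => measurable_of_finite g)
  set S : Ω → ℝ := ∑ l, Y l with hSdef
  have hSapp : ∀ ω, S ω = ∑ l, g (W l ω) := by
    intro ω; rw [hSdef]; simp [hYdef]
  have hSmeas : Measurable S := by
    rw [hSdef]
    have : (∑ l, Y l) = fun ω => ∑ l, Y l ω := by funext ω; simp
    rw [this]
    exact Finset.measurable_sum _ fun l _ => hYmeas l
  have hSbound : ∀ ω, |S ω| ≤ b * B := by
    intro ω
    rw [hSapp ω, abs_of_nonneg (Finset.sum_nonneg fun l _ => (hg _).1)]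
    calc ∑ l, g (W l ω) ≤ ∑ _l : Fin b, B :=
          Finset.sum_le_sum fun l _ => (hg _).2
      _ = b * B := by
          rw [Finset.sum_const, Finset.card_univ, Fintype.card_fin, nsmul_eq_mul]
  have hint : ∀ c : ℝ, Integrable (fun ω => Real.exp (c * S ω)) μ := by
    intro c
    apply Integrable.mono' (integrable_const (Real.exp (|c| * (b * B))))
      ((hSmeas.const_mul c).exp.aestronglyMeasurable)
    filter_upwards with ω
    rw [Real.norm_eq_abs, abs_of_pos (Real.exp_pos _), Real.exp_le_exp]
    calc c * S ω ≤ |c * S ω| := le_abs_self _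
      _ = |c| * |S ω| := abs_mul _ _
      _ ≤ |c| * (b * B) := by
          apply mul_le_mul_of_nonneg_left (hSbound ω) (abs_nonneg _)
  have hmgf : ∀ c : ℝ, |c| ≤ 1 / B →
      ProbabilityTheory.mgf S μ c ≤ Real.exp ((b:ℝ) * (c * m + c ^ 2 * B ^ 2)) := by
    intro c hc
    rw [hSdef, ProbabilityTheory.iIndepFun.mgf_sum hYindep hYmeas Finset.univ]
    calc ∏ l : Fin b, ProbabilityTheory.mgf (Y l) μ c
        ≤ ∏ _l : Fin b, Real.exp (c * m + c ^ 2 * B ^ 2) := by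
          apply Finset.prod_le_prod (fun _ _ => ProbabilityTheory.mgf_nonneg)
          intro l _
          exact mgf_unif_le μ hn (W l) (hW l) (hunif l) g hB hg hc
      _ = Real.exp ((b:ℝ) * (c * m + c ^ 2 * B ^ 2)) := by
          rw [Finset.prod_const, Finset.card_univ, Fintype.card_fin, ← Real.exp_nat_mul]
  set lam : ℝ := t / (2 * B ^ 2) with hlamdef
  have hlampos : 0 < lam := by positivity
  have hlamle : lam ≤ 1 / B := by
    rw [hlamdef, div_le_div_iff₀ (by positivity) hB]
    nlinarith
  have hexp_eq : (b:ℝ) * (-(lam * t) + lam ^ 2 * B ^ 2) = -(b * t ^ 2) / (4 * B ^ 2) := by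
    rw [hlamdef]
    field_simp
    ring
  have hexpbound : Real.exp (-lam * ((b:ℝ) * (m + t))) *
      Real.exp ((b:ℝ) * (lam * m + lam ^ 2 * B ^ 2))
      = Real.exp (-(b * t ^ 2) / (4 * B ^ 2)) := by
    rw [← Real.exp_add, ← hexp_eq]; ring_nf
  have hup : μ {ω | (b:ℝ) * (m + t) ≤ S ω} ≤
      ENNReal.ofReal (Real.exp (-(b * t ^ 2) / (4 * B ^ 2))) := by
    have h1 := ProbabilityTheory.measure_ge_le_exp_mul_mgf (μ := μ) (X := S)
      ((b:ℝ) * (m + t)) hlampos.le (hint lam)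
    have h2 : (μ {ω | (b:ℝ) * (m + t) ≤ S ω}).toReal ≤
        Real.exp (-(b * t ^ 2) / (4 * B ^ 2)) := by
      refine h1.trans ?_
      rw [← hexpbound]
      apply mul_le_mul_of_nonneg_left _ (Real.exp_pos _).le
      exact hmgf lam (by rwa [abs_of_pos hlampos])
    rw [← ENNReal.ofReal_toReal (measure_ne_top μ _)]
    exact ENNReal.ofReal_le_ofReal h2
  have hlo : μ {ω | S ω ≤ (b:ℝ) * (m - t)} ≤
      ENNReal.ofReal (Real.exp (-(b * t ^ 2) / (4 * B ^ 2))) := by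
    have h1 := ProbabilityTheory.measure_le_le_exp_mul_mgf (μ := μ) (X := S) (t := -lam)
      ((b:ℝ) * (m - t)) (by linarith) (hint (-lam))
    have h2 : (μ {ω | S ω ≤ (b:ℝ) * (m - t)}).toReal ≤
        Real.exp (-(b * t ^ 2) / (4 * B ^ 2)) := by
      refine h1.trans ?_
      have hmgf2 : ProbabilityTheory.mgf S μ (-lam) ≤
          Real.exp ((b:ℝ) * (-lam * m + lam ^ 2 * B ^ 2)) := by
        have := hmgf (-lam) (by rwa [abs_neg, abs_of_pos hlampos])
        simpa using this
      calc Real.exp (-(-lam) * ((b:ℝ) * (m - t))) * ProbabilityTheory.mgf S μ (-lam)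
          ≤ Real.exp (-(-lam) * ((b:ℝ) * (m - t))) *
            Real.exp ((b:ℝ) * (-lam * m + lam ^ 2 * B ^ 2)) := by
            apply mul_le_mul_of_nonneg_left hmgf2 (Real.exp_pos _).le
        _ = Real.exp (-(b * t ^ 2) / (4 * B ^ 2)) := by
            rw [← Real.exp_add, ← hexp_eq]; ring_nf
    rw [← ENNReal.ofReal_toReal (measure_ne_top μ _)]
    exact ENNReal.ofReal_le_ofReal h2
  have hincl : {ω | t ≤ |(b:ℝ)⁻¹ * ∑ l, g (W l ω) - m|} ⊆
      {ω | (b:ℝ) * (m + t) ≤ S ω} ∪ {ω | S ω ≤ (b:ℝ) * (m - t)} := by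
    intro ω hω
    simp only [Set.mem_setOf_eq] at hω
    rw [← hSapp ω] at hω
    have hbpos : (0:ℝ) < b := Nat.cast_pos.mpr hb
    rcases le_abs.mp hω with h | h
    · left
      show (b:ℝ) * (m + t) ≤ S ω
      have : (b:ℝ)⁻¹ * S ω ≥ m + t := by linarith
      calc (b:ℝ) * (m + t) ≤ (b:ℝ) * ((b:ℝ)⁻¹ * S ω) := by
            apply mul_le_mul_of_nonneg_left this hbpos.le
        _ = S ω := by field_simp
    · right
      show S ω ≤ (b:ℝ) * (m - t)
      have : (b:ℝ)⁻¹ * S ω ≤ m - t := by linarith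
      calc S ω = (b:ℝ) * ((b:ℝ)⁻¹ * S ω) := by field_simp
        _ ≤ (b:ℝ) * (m - t) := by
            apply mul_le_mul_of_nonneg_left this hbpos.le
  calc μ {ω | t ≤ |(b:ℝ)⁻¹ * ∑ l, g (W l ω) - m|}
      ≤ μ ({ω | (b:ℝ) * (m + t) ≤ S ω} ∪ {ω | S ω ≤ (b:ℝ) * (m - t)}) := measure_mono hincl
    _ ≤ μ {ω | (b:ℝ) * (m + t) ≤ S ω} + μ {ω | S ω ≤ (b:ℝ) * (m - t)} := measure_union_le _ _
    _ ≤ ENNReal.ofReal (Real.exp (-(b * t ^ 2) / (4 * B ^ 2))) +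
        ENNReal.ofReal (Real.exp (-(b * t ^ 2) / (4 * B ^ 2))) := add_le_add hup hlo
    _ = ENNReal.ofReal (2 * Real.exp (-(b * t ^ 2) / (4 * B ^ 2))) := by
        rw [← ENNReal.ofReal_add (Real.exp_pos _).le (Real.exp_pos _).le]
        norm_num [two_mul]

open scoped BigOperators

lemma real_arith_aux (n d k q b N Fc : ℕ) (hn : 0 < n) (hd : 0 < d) {ε : ℝ} (hε : 0 < ε)
    (hεd : ε ≤ d) (hFcard : (Fc:ℝ) ≤ 2 ^ (q * k * d)) (hN1 : (N:ℝ) ≤ 2 * d / ε + 1)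
    (hbge : (b : ℝ) ≥ 256 * ((d:ℝ) / ε) ^ 2 * ((q:ℝ) * k * d + Real.log ((n:ℝ) * d / ε))) :
    ((N * Fc : ℕ) : ℝ) *
      (2 * Real.exp (-((b:ℝ) * (ε/4) ^ 2) / (4 * (d:ℝ) ^ 2))) ≤ 6 / n := by
  have hdpos : (0:ℝ) < d := Nat.cast_pos.mpr hd
  have hnpos : (0:ℝ) < n := Nat.cast_pos.mpr hn
  set L : ℝ := Real.log ((n:ℝ) * d / ε) with hLdef
  have hLnn : 0 ≤ L := Real.log_nonneg (by
    rw [le_div_iff₀ hε]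
    have h1 : (1:ℝ) ≤ n := by exact_mod_cast hn
    nlinarith)
  have hA : (0:ℝ) ≤ (q:ℝ) * k * d + L := by positivity
  have hexple : -((b:ℝ) * (ε/4) ^ 2) / (4 * (d:ℝ) ^ 2) ≤
      -(4 * ((q:ℝ) * k * d + L)) := by
    rw [div_le_iff₀ (by positivity)]
    have h1 : (b:ℝ) ≥ 256 * ((d:ℝ)/ε) ^ 2 * ((q:ℝ) * k * d + L) := hbge
    have h2 : (b:ℝ) * (ε/4) ^ 2 ≥
        256 * ((d:ℝ)/ε) ^ 2 * ((q:ℝ) * k * d + L) * (ε/4) ^ 2 := by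
      apply mul_le_mul_of_nonneg_right h1 (by positivity)
    have h3 : 256 * ((d:ℝ)/ε) ^ 2 * ((q:ℝ) * k * d + L) * (ε/4) ^ 2 =
        4 * ((q:ℝ) * k * d + L) * (4 * (d:ℝ) ^ 2) := by
      field_simp
      ring
    nlinarith
  have hexp1 : Real.exp (-((b:ℝ) * (ε/4) ^ 2) / (4 * (d:ℝ) ^ 2)) ≤
      Real.exp (-(4 * ((q:ℝ) * k * d))) * Real.exp (-(4 * L)) := by
    rw [← Real.exp_add]
    apply Real.exp_le_exp.mpr
    linarith
  have hcard : (Fc : ℝ) ≤ Real.exp ((q:ℝ) * k * d) := by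
    calc (Fc : ℝ) ≤ ((2:ℝ)) ^ (q * k * d) := by
          exact_mod_cast hFcard
      _ ≤ (Real.exp 1) ^ (q * k * d) := by
          have h2 : (2:ℝ) ≤ Real.exp 1 := by
            have := Real.add_one_le_exp 1
            linarith
          exact pow_le_pow_left₀ (by norm_num) h2 _
      _ = Real.exp ((q * k * d : ℕ) : ℝ) := by
          rw [← Real.exp_nat_mul, mul_one]
      _ = Real.exp ((q:ℝ) * k * d) := by push_cast; ring
  have hcard2 : (Fc : ℝ) * Real.exp (-(4 * ((q:ℝ) * k * d))) ≤ 1 := by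
    calc (Fc : ℝ) * Real.exp (-(4 * ((q:ℝ) * k * d)))
        ≤ Real.exp ((q:ℝ) * k * d) * Real.exp (-(4 * ((q:ℝ) * k * d))) := by
          apply mul_le_mul_of_nonneg_right hcard (Real.exp_pos _).le
      _ = Real.exp (-(3 * ((q:ℝ) * k * d))) := by rw [← Real.exp_add]; ring_nf
      _ ≤ 1 := Real.exp_le_one_iff.mpr (neg_nonpos.mpr (by positivity))
  have hexpL : Real.exp (-(4 * L)) = (ε / ((n:ℝ) * d)) ^ 4 := by
    have h4 : Real.exp (-(4 * L)) = Real.exp (-L) ^ 4 := by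
      rw [← Real.exp_nat_mul]; norm_num
    rw [h4, Real.exp_neg, hLdef, Real.exp_log (by positivity), inv_div]
  have hNle : (N : ℝ) ≤ 3 * (d / ε) := by
    have hde : (1:ℝ) ≤ d / ε := (one_le_div hε).mpr hεd
    calc (N:ℝ) ≤ 2 * d / ε + 1 := hN1
      _ ≤ 2 * (d / ε) + (d / ε) := by
          rw [mul_div_assoc]; linarith
      _ = 3 * (d / ε) := by ring
  have hfinal : ((N * Fc : ℕ) : ℝ) *
      (2 * Real.exp (-((b:ℝ) * (ε/4) ^ 2) / (4 * (d:ℝ) ^ 2))) ≤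
      3 * (d / ε) * (2 * ((ε / ((n:ℝ) * d)) ^ 4)) := by
    rw [Nat.cast_mul]
    calc (N:ℝ) * Fc * (2 * Real.exp (-((b:ℝ) * (ε/4) ^ 2) / (4 * (d:ℝ) ^ 2)))
        ≤ (N:ℝ) * Fc *
            (2 * (Real.exp (-(4 * ((q:ℝ) * k * d))) * Real.exp (-(4 * L)))) := by
          apply mul_le_mul_of_nonneg_left _ (by positivity)
          apply mul_le_mul_of_nonneg_left hexp1 (by norm_num)
      _ = ((Fc : ℝ) * Real.exp (-(4 * ((q:ℝ) * k * d)))) *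
            ((N:ℝ) * (2 * Real.exp (-(4 * L)))) := by ring
      _ ≤ 1 * ((N:ℝ) * (2 * Real.exp (-(4 * L)))) := by
          apply mul_le_mul_of_nonneg_right hcard2 (by positivity)
      _ = (N:ℝ) * (2 * Real.exp (-(4 * L))) := one_mul _
      _ ≤ (3 * (d / ε)) * (2 * Real.exp (-(4 * L))) := by
          apply mul_le_mul_of_nonneg_right hNle (by positivity)
      _ = 3 * (d / ε) * (2 * ((ε / ((n:ℝ) * d)) ^ 4)) := by rw [hexpL]
  refine hfinal.trans ?_
  have heq : 3 * ((d:ℝ) / ε) * (2 * ((ε / ((n:ℝ) * d)) ^ 4)) =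
      6 * ε ^ 3 / ((n:ℝ) ^ 4 * d ^ 3) := by
    field_simp
    ring
  rw [heq]
  rw [div_le_div_iff₀ (by positivity) hnpos]
  have hε3 : ε ^ 3 ≤ (d:ℝ) ^ 3 := pow_le_pow_left₀ hε.le hεd 3
  have hn4 : (n:ℝ) ≤ (n:ℝ) ^ 4 := by
    calc (n:ℝ) = n * 1 * 1 * 1 := by ring
      _ ≤ n * n * n * n := by
          have h1 : (1:ℝ) ≤ n := by exact_mod_cast hn
          apply mul_le_mul (mul_le_mul (mul_le_mul le_rfl h1 zero_le_one hnpos.le)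
            h1 zero_le_one (by positivity)) h1 zero_le_one (by positivity)
      _ = (n:ℝ) ^ 4 := by ring
  nlinarith [pow_pos hnpos 4, pow_pos hdpos 3]


/-- generic mini-batch k-means over a finite family `F` of at most
`2^(qkd)` configurations of centers, with an arbitrary update rule `U : F × batch → F`,
i.i.d. uniform batches `B_i` of size `b`, and stopping as soon as the batch progress
drops below `ε`.  There are absolute constants `c₁, c₂ > 0` such that if
`b ≥ c₁·(d/ε)²·(qkd + log(nd/ε))` then with probability at least `1 − c₂/n` the
process stops within the first `2d/ε + 1` iterations. -/
theorem generic_minibatch_kmeans_terminates :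
    ∃ c₁ c₂ : ℝ, 0 < c₁ ∧ 0 < c₂ ∧
      ∀ (n d k b q : ℕ), 0 < n → 0 < d → 0 < k → 0 < b →
      ∀ (ε : ℝ), 0 < ε →
      ∀ (X : Fin n → EuclideanSpace ℝ (Fin d)),
        (∀ i j, X i j ∈ Set.Icc (0 : ℝ) 1) →
      ∀ (F : Finset (Fin k → EuclideanSpace ℝ (Fin d))),
        (∀ C ∈ F, ∀ i j, C i j ∈ Set.Icc (0 : ℝ) 1) →
        F.card ≤ 2 ^ (q * k * d) →
      ∀ (U : (Fin k → EuclideanSpace ℝ (Fin d)) → (Fin b → EuclideanSpace ℝ (Fin d)) →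
              (Fin k → EuclideanSpace ℝ (Fin d))),
        (∀ C ∈ F, ∀ B, U C B ∈ F) →
      ∀ (C₁ : Fin k → EuclideanSpace ℝ (Fin d)), C₁ ∈ F →
      ∀ (Ω : Type) (_ : MeasurableSpace Ω) (μ : Measure Ω) (_ : IsProbabilityMeasure μ)
        (J : ℕ × Fin b → Ω → Fin n),
        (∀ p, Measurable (J p)) →
        ProbabilityTheory.iIndepFun J μ →
        (∀ p x, μ {ω | J p ω = x} = 1 / n) →
      ∀ (Cseq : ℕ → Ω → (Fin k → EuclideanSpace ℝ (Fin d))),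
        (∀ ω, Cseq 1 ω = C₁) →
        (∀ i ω, 1 ≤ i → Cseq (i + 1) ω = U (Cseq i ω) (fun l => X (J (i, l) ω))) →
        (b : ℝ) ≥ c₁ * (d / ε) ^ 2 * (q * k * d + Real.log (n * d / ε)) →
        μ {ω | ∃ i : ℕ, 1 ≤ i ∧ (i : ℝ) ≤ 2 * d / ε + 1 ∧
            kmCostTuple (Cseq i ω) (fun l => X (J (i, l) ω)) -
              kmCostTuple (Cseq (i + 1) ω) (fun l => X (J (i, l) ω)) < ε}
          ≥ ENNReal.ofReal (1 - c₂ / n) := by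
  refine ⟨256, 6, by norm_num, by norm_num, ?_⟩
  intro n d k b q hn hd hk hb ε hε X hX F hF hFcard U hU C₁ hC₁ Ω mΩ μ hμ J hJmeas hJindep
    hJunif Cseq hCinit hCstep hbge
  have hdpos : (0:ℝ) < d := Nat.cast_pos.mpr hd
  have hnpos : (0:ℝ) < n := Nat.cast_pos.mpr hn
  set E : Set Ω := {ω | ∃ i : ℕ, 1 ≤ i ∧ (i : ℝ) ≤ 2 * d / ε + 1 ∧
      kmCostTuple (Cseq i ω) (fun l => X (J (i, l) ω)) -
        kmCostTuple (Cseq (i + 1) ω) (fun l => X (J (i, l) ω)) < ε} with hEdef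
  -- main claim : μ Eᶜ ≤ ofReal (6/n)
  have key : μ Eᶜ ≤ ENNReal.ofReal (6 / n) := by
    by_cases hεd : ε ≤ d
    · -- main case
      -- membership of the iterates in F
      have hmem : ∀ ω, ∀ i : ℕ, 1 ≤ i → Cseq i ω ∈ F := by
        intro ω i hi
        induction i, hi using Nat.le_induction with
        | base => rw [hCinit ω]; exact hC₁
        | succ i hi ih =>
            rw [hCstep i ω hi]
            exact hU _ ih _
      set N : ℕ := ⌊2 * (d:ℝ) / ε⌋₊ + 1 with hNdef
      have hN1 : (N : ℝ) ≤ 2 * d / ε + 1 := by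
        rw [hNdef]
        push_cast
        have := Nat.floor_le (show (0:ℝ) ≤ 2 * d / ε by positivity)
        linarith
      have hN2 : 2 * (d:ℝ) / ε < N := by
        rw [hNdef]; push_cast; exact Nat.lt_floor_add_one _
      set g : (Fin k → EuclideanSpace ℝ (Fin d)) → Fin n → ℝ :=
        fun C x => kmCost C (X x) with hgdef
      have hgbound : ∀ C ∈ F, ∀ x, g C x ∈ Set.Icc (0:ℝ) d := by
        intro C hC x
        exact ⟨kmCost_nonneg' C (X x), kmCost_le hk C (X x) (hF C hC) (hX x)⟩
      set D : ℕ → (Fin k → EuclideanSpace ℝ (Fin d)) → Set Ω :=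
        fun i C => {ω | ε/4 ≤ |(b:ℝ)⁻¹ * ∑ l, g C (J (i, l) ω) - (n:ℝ)⁻¹ * ∑ x, g C x|}
        with hDdef
      have hD : ∀ i : ℕ, ∀ C ∈ F, μ (D i C) ≤
          ENNReal.ofReal (2 * Real.exp (-((b:ℝ) * (ε/4) ^ 2) / (4 * (d:ℝ) ^ 2))) := by
        intro i C hC
        apply batch_dev_bound μ hn hb (fun l => J (i, l)) (fun l => hJmeas _)
          (iIndepFun_comp_right hJindep (e := fun l : Fin b => ((i, l) : ℕ × Fin b))
            (fun l l' h => by simpa using congrArg Prod.snd h))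
          (fun l x => hJunif _ _) (g C) hdpos (hgbound C hC) (by positivity)
          (by linarith)
      set bad : Set Ω := ⋃ i ∈ Finset.Icc 1 N, ⋃ C ∈ F, D i C with hbaddef
      have hbadbound : μ bad ≤ ENNReal.ofReal ((N * F.card : ℕ) *
          (2 * Real.exp (-((b:ℝ) * (ε/4) ^ 2) / (4 * (d:ℝ) ^ 2)))) := by
        calc μ bad ≤ ∑ i ∈ Finset.Icc 1 N, μ (⋃ C ∈ F, D i C) :=
              measure_biUnion_finset_le _ _
          _ ≤ ∑ i ∈ Finset.Icc 1 N, ∑ C ∈ F,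
              ENNReal.ofReal (2 * Real.exp (-((b:ℝ) * (ε/4) ^ 2) / (4 * (d:ℝ) ^ 2))) := by
              apply Finset.sum_le_sum
              intro i _
              calc μ (⋃ C ∈ F, D i C) ≤ ∑ C ∈ F, μ (D i C) := measure_biUnion_finset_le _ _
                _ ≤ _ := Finset.sum_le_sum fun C hC => hD i C hC
          _ = ((N * F.card : ℕ) : ℝ≥0∞) *
              ENNReal.ofReal (2 * Real.exp (-((b:ℝ) * (ε/4) ^ 2) / (4 * (d:ℝ) ^ 2))) := by
              simp [Finset.sum_const, Nat.card_Icc, mul_assoc, mul_comm, mul_left_comm]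
          _ = _ := by
              rw [← ENNReal.ofReal_natCast, ← ENNReal.ofReal_mul (by positivity)]
      -- real arithmetic
      have hreal : ((N * F.card : ℕ) : ℝ) *
          (2 * Real.exp (-((b:ℝ) * (ε/4) ^ 2) / (4 * (d:ℝ) ^ 2))) ≤ 6 / n :=
        real_arith_aux n d k q b N F.card hn hd hε hεd
          (by exact_mod_cast hFcard) hN1 hbge
      -- the good event implies stopping
      have hgood : Eᶜ ⊆ bad := by
        intro ω hω
        by_contra hωbad
        apply hω
        rw [hEdef]
        simp only [Set.mem_setOf_eq]
        by_contra hno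
        push_neg at hno
        have hdev : ∀ i ∈ Finset.Icc 1 N, ∀ C ∈ F,
            |(b:ℝ)⁻¹ * ∑ l, g C (J (i, l) ω) - (n:ℝ)⁻¹ * ∑ x, g C x| < ε/4 := by
          intro i hi C hC
          by_contra hcon
          push_neg at hcon
          apply hωbad
          rw [hbaddef]
          simp only [Set.mem_iUnion]
          exact ⟨i, hi, C, hC, hcon⟩
        -- true costs
        set M : ℕ → ℝ := fun i => kmCostTuple (Cseq i ω) X with hMdef
        have hbatch_eq : ∀ i : ℕ, ∀ C, kmCostTuple C (fun l => X (J (i, l) ω)) =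
            (b:ℝ)⁻¹ * ∑ l, g C (J (i, l) ω) := fun i C => rfl
        have hM_eq : ∀ C, kmCostTuple C X = (n:ℝ)⁻¹ * ∑ x, g C x := fun C => rfl
        have hdec : ∀ i ∈ Finset.Icc 1 N, M (i+1) ≤ M i - ε/2 := by
          intro i hi
          rw [Finset.mem_Icc] at hi
          have hi1 : 1 ≤ i := hi.1
          have hiN : (i:ℝ) ≤ 2 * d / ε + 1 := by
            calc (i:ℝ) ≤ N := by exact_mod_cast hi.2
              _ ≤ 2 * d / ε + 1 := hN1
          have hprog := hno i hi1 hiN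
          have hd1 := hdev i (Finset.mem_Icc.mpr hi) (Cseq i ω) (hmem ω i hi1)
          have hd2 := hdev i (Finset.mem_Icc.mpr hi) (Cseq (i+1) ω) (hmem ω (i+1) (by omega))
          rw [← hbatch_eq i (Cseq i ω), ← hM_eq (Cseq i ω)] at hd1
          rw [← hbatch_eq i (Cseq (i+1) ω), ← hM_eq (Cseq (i+1) ω)] at hd2
          have h1 := abs_lt.mp hd1
          have h2 := abs_lt.mp hd2
          rw [hMdef]
          simp only
          linarith [h1.1, h1.2, h2.1, h2.2]
        have htel : ∀ j : ℕ, j ≤ N → M (j + 1) ≤ M 1 - j * (ε/2) := by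
          intro j hj
          induction j with
          | zero => simp
          | succ j ih =>
              have hj' : j ≤ N := by omega
              have hstep := hdec (j+1) (Finset.mem_Icc.mpr ⟨by omega, hj⟩)
              have := ih hj'
              push_cast
              push_cast at this
              linarith
        have hM1 : M 1 ≤ d := by
          rw [hMdef]
          simp only
          rw [hCinit ω]
          exact kmCostTuple_le hk C₁ X (hF C₁ hC₁) hX
        have hMN : 0 ≤ M (N + 1) := kmCostTuple_nonneg _ _
        have hcontr := htel N le_rfl
        have hNbig : (d:ℝ) < (N:ℝ) * (ε/2) := by
          have : 2 * (d:ℝ) / ε * (ε/2) < (N:ℝ) * (ε/2) := by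
            apply mul_lt_mul_of_pos_right hN2 (by positivity)
          calc (d:ℝ) = 2 * (d:ℝ) / ε * (ε/2) := by field_simp
            _ < (N:ℝ) * (ε/2) := this
        linarith
      calc μ Eᶜ ≤ μ bad := measure_mono hgood
        _ ≤ ENNReal.ofReal ((N * F.card : ℕ) *
            (2 * Real.exp (-((b:ℝ) * (ε/4) ^ 2) / (4 * (d:ℝ) ^ 2)))) := hbadbound
        _ ≤ ENNReal.ofReal (6 / n) := ENNReal.ofReal_le_ofReal hreal
    · -- degenerate case ε > d : the process stops at i = 1 always
      push_neg at hεd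
      have hE : Eᶜ = ∅ := by
        have huniv : E = Set.univ := by
          rw [hEdef]
          ext ω
          simp only [Set.mem_setOf_eq, Set.mem_univ, iff_true]
          refine ⟨1, le_rfl, ?_, ?_⟩
          · have : (0:ℝ) < 2 * d / ε := by positivity
            push_cast
            linarith
          · have h1 : kmCostTuple (Cseq 1 ω) (fun l => X (J (1, l) ω)) ≤ d := by
              rw [hCinit ω]
              exact kmCostTuple_le hk C₁ _ (hF C₁ hC₁) (fun l j => hX _ j)
            have h2 : 0 ≤ kmCostTuple (Cseq 2 ω) (fun l => X (J (1, l) ω)) :=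
              kmCostTuple_nonneg _ _
            have : kmCostTuple (Cseq (1+1) ω) (fun l => X (J (1, l) ω)) =
                kmCostTuple (Cseq 2 ω) (fun l => X (J (1, l) ω)) := by norm_num
            rw [this]
            linarith
        rw [huniv, Set.compl_univ]
      rw [hE]
      simp
  -- conclude
  have h1 : (1 : ℝ≥0∞) ≤ μ E + ENNReal.ofReal (6 / n) := by
    calc (1 : ℝ≥0∞) = μ Set.univ := (measure_univ).symm
      _ = μ (E ∪ Eᶜ) := by rw [Set.union_compl_self]
      _ ≤ μ E + μ Eᶜ := measure_union_le _ _
      _ ≤ μ E + ENNReal.ofReal (6 / n) := add_le_add le_rfl key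
  rw [ge_iff_le, ENNReal.ofReal_sub 1 (by positivity), ENNReal.ofReal_one]
  exact tsub_le_iff_right.mpr h1
end

section
/- Let B′ be a finite nonempty tuple of b′ points in ℝ^d, let C ∈ ℝ^d, let α ∈ [0,1], and set C′ = (1−α)·C + α·cm(B′). Then Δ(B′, C) − Δ(B′, C′) = (2α − α²)·b′·Δ(C, cm(B′)), and in particular Δ(B′, C) − Δ(B′, C′) ≥ α·b′·Δ(C, cm(B′)). -/
open scoped BigOperators

open RealInnerProductSpace in
lemma bias_variance {d b' : ℕ} (B : Fin b' → EuclideanSpace ℝ (Fin d))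
    (c m : EuclideanSpace ℝ (Fin d)) (hm : (b' : ℝ) • m = ∑ i : Fin b', B i) :
    ∑ l : Fin b', ‖B l - c‖ ^ 2
      = (∑ l : Fin b', ‖B l - m‖ ^ 2) + b' * ‖c - m‖ ^ 2 := by
  have h : ∀ l : Fin b', ‖B l - c‖ ^ 2
      = ‖B l - m‖ ^ 2 + 2 * ⟪B l - m, m - c⟫ + ‖m - c‖ ^ 2 := by
    intro l
    have : B l - c = (B l - m) + (m - c) := by abel
    rw [this, norm_add_sq_real]
  have hzero : ∑ l : Fin b', ⟪B l - m, m - c⟫ = 0 := by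
    rw [← sum_inner]
    have : ∑ l : Fin b', (B l - m) = 0 := by
      rw [Finset.sum_sub_distrib, Finset.sum_const, Finset.card_univ,
        Fintype.card_fin, ← hm]
      simp [← Nat.cast_smul_eq_nsmul ℝ]
    rw [this, inner_zero_left]
  calc ∑ l : Fin b', ‖B l - c‖ ^ 2
      = ∑ l : Fin b', (‖B l - m‖ ^ 2 + 2 * ⟪B l - m, m - c⟫ + ‖m - c‖ ^ 2) := by
        exact Finset.sum_congr rfl fun l _ => h l
    _ = (∑ l : Fin b', ‖B l - m‖ ^ 2) + 2 * ∑ l : Fin b', ⟪B l - m, m - c⟫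
          + b' * ‖m - c‖ ^ 2 := by
        rw [Finset.sum_add_distrib, Finset.sum_add_distrib, ← Finset.mul_sum]
        simp [Finset.card_univ, mul_comm]
    _ = (∑ l : Fin b', ‖B l - m‖ ^ 2) + b' * ‖c - m‖ ^ 2 := by
        rw [hzero, norm_sub_rev m c]; ring

/-- moving a center `C` towards the center of mass of a nonempty tuple
`B'` by a factor `α ∈ [0,1]` decreases `Δ(B', ·)` by exactly
`(2α − α²)·|B'|·Δ(C, cm(B'))`, hence by at least `α·|B'|·Δ(C, cm(B'))`. -/
theorem progress_of_center_update {d b' : ℕ} (hb' : 0 < b')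
    (B : Fin b' → EuclideanSpace ℝ (Fin d))
    (C : EuclideanSpace ℝ (Fin d)) (α : ℝ) (hα : α ∈ Set.Icc (0 : ℝ) 1) :
    ((∑ l : Fin b', ‖B l - C‖ ^ 2) -
        ∑ l : Fin b', ‖B l - ((1 - α) • C + α • ((b' : ℝ)⁻¹ • ∑ i : Fin b', B i))‖ ^ 2)
      = (2 * α - α ^ 2) * b' * ‖C - ((b' : ℝ)⁻¹ • ∑ i : Fin b', B i)‖ ^ 2
    ∧ ((∑ l : Fin b', ‖B l - C‖ ^ 2) -
        ∑ l : Fin b', ‖B l - ((1 - α) • C + α • ((b' : ℝ)⁻¹ • ∑ i : Fin b', B i))‖ ^ 2)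
      ≥ α * b' * ‖C - ((b' : ℝ)⁻¹ • ∑ i : Fin b', B i)‖ ^ 2 := by
  obtain ⟨hα0, hα1⟩ := hα
  have hbne : (b' : ℝ) ≠ 0 := Nat.cast_ne_zero.mpr hb'.ne'
  set m : EuclideanSpace ℝ (Fin d) := (b' : ℝ)⁻¹ • ∑ i : Fin b', B i with hmdef
  have hm : (b' : ℝ) • m = ∑ i : Fin b', B i := by
    rw [hmdef, smul_smul, mul_inv_cancel₀ hbne, one_smul]
  set C' : EuclideanSpace ℝ (Fin d) := (1 - α) • C + α • m with hC'
  have hCm : C' - m = (1 - α) • (C - m) := by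
    rw [hC']; module
  have h1 := bias_variance B C m hm
  have h2 := bias_variance B C' m hm
  have hnorm : ‖C' - m‖ ^ 2 = (1 - α) ^ 2 * ‖C - m‖ ^ 2 := by
    rw [hCm, norm_smul, mul_pow]
    rw [Real.norm_eq_abs, sq_abs]
  have key : ((∑ l : Fin b', ‖B l - C‖ ^ 2) - ∑ l : Fin b', ‖B l - C'‖ ^ 2)
      = (2 * α - α ^ 2) * b' * ‖C - m‖ ^ 2 := by
    rw [h1, h2, hnorm]; ring
  refine ⟨key, ?_⟩
  rw [key]
  have hnn : (0 : ℝ) ≤ (b' : ℝ) * ‖C - m‖ ^ 2 :=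
    mul_nonneg (Nat.cast_nonneg _) (sq_nonneg _)
  have : α ≤ 2 * α - α ^ 2 := by nlinarith
  calc α * b' * ‖C - m‖ ^ 2 = α * ((b' : ℝ) * ‖C - m‖ ^ 2) := by ring
    _ ≤ (2 * α - α ^ 2) * ((b' : ℝ) * ‖C - m‖ ^ 2) := by
        exact mul_le_mul_of_nonneg_right this hnn
    _ = (2 * α - α ^ 2) * b' * ‖C - m‖ ^ 2 := by ring
end

section
/- Let B be a tuple of b points in [0,1]^d, let 𝒞_i = (𝒞_i^1,...,𝒞_i^k) be a tuple of k centers in [0,1]^d, let (B^j)_{j∈[k]} be the partition of B induced by 𝒞_i with b^j = |B^j|, set α^j = √(b^j/b), and define 𝒞_{i+1}^j = (1 − α^j)·𝒞_i^j + α^j·cm(B^j) (with 𝒞_{i+1}^j = 𝒞_i^j when b^j = 0). If Σ_{j∈[k]} ‖𝒞_{i+1}^j − 𝒞_i^j‖² > ε, then f_B(𝒞_i) − f_B(𝒞_{i+1}) > ε^{3/2}/√(kd). -/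
open scoped BigOperators

/-- Mini-batch center update with learning rate `α = √(|s|/b)`: the new center is
`(1 − α)·Cⱼ + α·cm(B restricted to s)`, and `Cⱼ` itself when `s` is empty. -/
noncomputable def miniBatchUpdate {d b : ℕ} (B : Fin b → EuclideanSpace ℝ (Fin d))
    (s : Finset (Fin b)) (Cj : EuclideanSpace ℝ (Fin d)) : EuclideanSpace ℝ (Fin d) :=
  if s.Nonempty then
    (1 - Real.sqrt (s.card / b)) • Cj
      + Real.sqrt (s.card / b) • ((s.card : ℝ)⁻¹ • ∑ l ∈ s, B l)
  else Cj

private lemma cluster_drop {d b : ℕ} (hb : 0 < b) (B : Fin b → EuclideanSpace ℝ (Fin d))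
    (s : Finset (Fin b)) (hsb : s.card ≤ b) (x : EuclideanSpace ℝ (Fin d)) :
    (b : ℝ) * (Real.sqrt (s.card / b) * ‖miniBatchUpdate B s x - x‖ ^ 2)
      ≤ ∑ l ∈ s, (‖B l - x‖ ^ 2 - ‖B l - miniBatchUpdate B s x‖ ^ 2) := by
  by_cases hs : s.Nonempty
  · have hb' : (0 : ℝ) < b := by exact_mod_cast hb
    set n : ℝ := (s.card : ℝ) with hn
    have hn0 : (0:ℝ) < n := by rw [hn]; exact_mod_cast Finset.card_pos.2 hs
    set a : ℝ := Real.sqrt (n / b) with ha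
    have ha0 : (0:ℝ) ≤ a := Real.sqrt_nonneg _
    have ha2 : a ^ 2 = n / b := Real.sq_sqrt (by positivity)
    have ha1 : a ≤ 1 := by
      rw [ha, show (1:ℝ) = Real.sqrt 1 by simp]
      apply Real.sqrt_le_sqrt
      rw [div_le_one hb', hn]
      exact_mod_cast hsb
    set μ : EuclideanSpace ℝ (Fin d) := n⁻¹ • ∑ l ∈ s, B l with hμ
    have hupd : miniBatchUpdate B s x = (1 - a) • x + a • μ := by
      simp only [miniBatchUpdate, if_pos hs]; rfl
    set v : EuclideanSpace ℝ (Fin d) := μ - x with hv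
    have hyx : miniBatchUpdate B s x - x = a • v := by
      rw [hupd, hv]; module
    have hsum : ∑ l ∈ s, (B l - x) = n • v := by
      rw [Finset.sum_sub_distrib, Finset.sum_const, hv, smul_sub]
      congr 1
      · rw [hμ, smul_inv_smul₀ (ne_of_gt hn0)]
      · rw [hn]; exact (Nat.cast_smul_eq_nsmul ℝ _ _).symm
    have hnv : ‖a • v‖ ^ 2 = a ^ 2 * ‖v‖ ^ 2 := by
      rw [norm_smul, mul_pow, Real.norm_eq_abs, sq_abs]
    have key : ∑ l ∈ s, (‖B l - x‖ ^ 2 - ‖B l - miniBatchUpdate B s x‖ ^ 2)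
        = 2 * (n * (a * ‖v‖ ^ 2)) - n * (a ^ 2 * ‖v‖ ^ 2) := by
      have hpt : ∀ l, ‖B l - x‖ ^ 2 - ‖B l - miniBatchUpdate B s x‖ ^ 2
          = 2 * (inner ℝ (B l - x) (a • v) : ℝ) - ‖a • v‖ ^ 2 := by
        intro l
        have h1 : B l - miniBatchUpdate B s x = (B l - x) - a • v := by
          rw [← hyx]; abel
        rw [h1, norm_sub_sq_real (B l - x) (a • v)]; ring
      rw [Finset.sum_congr rfl fun l _ => hpt l, Finset.sum_sub_distrib,
        Finset.sum_const, ← Finset.mul_sum, ← sum_inner, hsum,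
        real_inner_smul_left, real_inner_smul_right, real_inner_self_eq_norm_sq,
        hnv]
      have : (s.card : ℝ) = n := hn.symm
      rw [nsmul_eq_mul, this]
    rw [key, hyx, hnv]
    have hba : (b : ℝ) * a ^ 2 = n := by rw [ha2]; field_simp
    have heq : (b:ℝ) * (a * (a ^ 2 * ‖v‖ ^ 2)) = n * (a * ‖v‖ ^ 2) := by
      rw [← hba]; ring
    have hprod : 0 ≤ n * (a * ‖v‖ ^ 2) * (1 - a) :=
      mul_nonneg (mul_nonneg hn0.le (mul_nonneg ha0 (sq_nonneg _))) (by linarith)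
    nlinarith [hprod, heq]
  · rw [Finset.not_nonempty_iff_eq_empty] at hs
    simp [miniBatchUpdate, hs]

private lemma norm_sq_le_dim {d : ℕ} (u w : EuclideanSpace ℝ (Fin d))
    (hu : ∀ i, u i ∈ Set.Icc (0:ℝ) 1) (hw : ∀ i, w i ∈ Set.Icc (0:ℝ) 1) :
    ‖u - w‖ ^ 2 ≤ d := by
  rw [EuclideanSpace.norm_eq, Real.sq_sqrt (by positivity)]
  calc ∑ i, ‖(u - w) i‖ ^ 2 ≤ ∑ _i : Fin d, (1:ℝ) := by
        apply Finset.sum_le_sum; intro i _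
        have h1 := hu i; have h2 := hw i
        simp only [PiLp.sub_apply, Real.norm_eq_abs, sq_abs]
        nlinarith [h1.1, h1.2, h2.1, h2.2]
    _ = d := by simp

private lemma update_move_le {d b : ℕ} (hb : 0 < b) (B : Fin b → EuclideanSpace ℝ (Fin d))
    (hB : ∀ l i, B l i ∈ Set.Icc (0:ℝ) 1)
    (s : Finset (Fin b)) (x : EuclideanSpace ℝ (Fin d)) (hx : ∀ i, x i ∈ Set.Icc (0:ℝ) 1) :
    ‖miniBatchUpdate B s x - x‖ ^ 2 ≤ Real.sqrt (s.card / b) ^ 2 * d := by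
  by_cases hs : s.Nonempty
  · have hn0 : (0:ℝ) < s.card := by exact_mod_cast Finset.card_pos.2 hs
    set a : ℝ := Real.sqrt ((s.card : ℝ) / b) with ha
    have ha0 : (0:ℝ) ≤ a := Real.sqrt_nonneg _
    set μ : EuclideanSpace ℝ (Fin d) := (s.card : ℝ)⁻¹ • ∑ l ∈ s, B l with hμ
    have hupd : miniBatchUpdate B s x = (1 - a) • x + a • μ := by
      simp only [miniBatchUpdate, if_pos hs]; rfl
    have hyx : miniBatchUpdate B s x - x = a • (μ - x) := by
      rw [hupd]; module
    have hμmem : ∀ i, μ i ∈ Set.Icc (0:ℝ) 1 := by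
      intro i
      have hsumi : (∑ l ∈ s, B l) i = ∑ l ∈ s, B l i := by
        exact map_sum (EuclideanSpace.proj i (𝕜 := ℝ)) B s
      have h0 : (0:ℝ) ≤ ∑ l ∈ s, B l i :=
        Finset.sum_nonneg fun l _ => (hB l i).1
      have h1 : ∑ l ∈ s, B l i ≤ s.card :=
        le_trans (Finset.sum_le_sum fun l _ => (hB l i).2) (by simp)
      have : μ i = (s.card : ℝ)⁻¹ * ∑ l ∈ s, B l i := by
        rw [hμ, PiLp.smul_apply, hsumi, smul_eq_mul]
      rw [this]
      constructor
      · positivity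
      · rw [inv_mul_le_iff₀ hn0, mul_one]; exact h1
    rw [hyx, norm_smul, mul_pow, Real.norm_eq_abs, sq_abs]
    exact mul_le_mul_of_nonneg_left (norm_sq_le_dim μ x hμmem hx) (sq_nonneg a)
  · rw [Finset.not_nonempty_iff_eq_empty] at hs
    simp [miniBatchUpdate, hs]

private lemma rpow_three_halves {x : ℝ} (hx : 0 ≤ x) :
    x ^ ((3:ℝ)/2) = x * Real.sqrt x := by
  rcases hx.eq_or_lt with h | h
  · rw [← h, Real.zero_rpow (by norm_num), Real.sqrt_zero, mul_zero]
  · rw [show (3:ℝ)/2 = 1 + 1/2 by norm_num, Real.rpow_add h, Real.rpow_one,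
      ← Real.sqrt_eq_rpow]

private lemma jensen_three_halves {k : ℕ} (hk : 0 < k) (m : Fin k → ℝ)
    (hm : ∀ j, 0 ≤ m j) :
    (∑ j, m j) ^ ((3:ℝ)/2) ≤ Real.sqrt k * ∑ j, m j * Real.sqrt (m j) := by
  have hk' : (0:ℝ) < k := by exact_mod_cast hk
  have h := Real.rpow_arith_mean_le_arith_mean_rpow Finset.univ
      (fun _ : Fin k => (k:ℝ)⁻¹) m (fun _ _ => by positivity)
      (by simp [Finset.card_univ, mul_comm]; field_simp)
      (fun j _ => hm j) (by norm_num : (1:ℝ) ≤ (3:ℝ)/2)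
  rw [← Finset.mul_sum, ← Finset.mul_sum,
    Real.mul_rpow (by positivity) (Finset.sum_nonneg fun j _ => hm j)] at h
  have hks : ((k:ℝ)⁻¹) ^ ((3:ℝ)/2) = ((k:ℝ) ^ ((3:ℝ)/2))⁻¹ := by
    rw [← Real.rpow_neg_one, ← Real.rpow_mul hk'.le,
      show (-1 : ℝ) * (3/2) = -(3/2) by norm_num, Real.rpow_neg hk'.le]
  rw [hks] at h
  have hkpos : (0:ℝ) < (k:ℝ) ^ ((3:ℝ)/2) := Real.rpow_pos_of_pos hk' _
  have h2 : (∑ j, m j) ^ ((3:ℝ)/2) ≤ (k:ℝ) ^ ((3:ℝ)/2) * ((k:ℝ)⁻¹ * ∑ j, m j ^ ((3:ℝ)/2)) := by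
    rw [← inv_mul_le_iff₀ hkpos]
    exact h
  calc (∑ j, m j) ^ ((3:ℝ)/2)
      ≤ (k:ℝ) ^ ((3:ℝ)/2) * ((k:ℝ)⁻¹ * ∑ j, m j ^ ((3:ℝ)/2)) := h2
    _ = Real.sqrt k * ∑ j, m j ^ ((3:ℝ)/2) := by
        rw [← mul_assoc]
        congr 1
        rw [Real.sqrt_eq_rpow, ← Real.rpow_neg_one, ← Real.rpow_add hk']
        norm_num
    _ = Real.sqrt k * ∑ j, m j * Real.sqrt (m j) := by
        congr 1
        exact Finset.sum_congr rfl fun j _ => rpow_three_halves (hm j)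

/-- one step of mini-batch k-means with learning rate `α^j = √(b^j/b)`:
if the centers move a lot, `Σ_j ‖𝒞_{i+1}^j − 𝒞_i^j‖² > ε`, then the batch cost drops a
lot, `f_B(𝒞_i) − f_B(𝒞_{i+1}) > ε^{3/2}/√(kd)`.  Here `p` assigns each batch point to a
nearest center of `𝒞_i` (the induced partition, ties broken arbitrarily). -/
theorem center_movement_implies_batch_progress {d k b : ℕ}
    (hd : 0 < d) (hk : 0 < k) (hb : 0 < b)
    (B : Fin b → EuclideanSpace ℝ (Fin d))
    (hB : ∀ l j, B l j ∈ Set.Icc (0 : ℝ) 1)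
    (C : Fin k → EuclideanSpace ℝ (Fin d))
    (hC : ∀ i j, C i j ∈ Set.Icc (0 : ℝ) 1)
    (p : Fin b → Fin k)
    (hp : ∀ l j, ‖B l - C (p l)‖ ≤ ‖B l - C j‖)
    (ε : ℝ) (hε : 0 < ε)
    (hmove : ∑ j : Fin k,
        ‖miniBatchUpdate B (Finset.univ.filter (fun l => p l = j)) (C j) - C j‖ ^ 2 > ε) :
    kmCostTuple C B -
        kmCostTuple (fun j => miniBatchUpdate B (Finset.univ.filter (fun l => p l = j)) (C j)) B
      > ε ^ ((3 : ℝ) / 2) / Real.sqrt (k * d) := by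
  classical
  have hb' : (0:ℝ) < b := by exact_mod_cast hb
  have hk' : (0:ℝ) < k := by exact_mod_cast hk
  have hd' : (0:ℝ) < d := by exact_mod_cast hd
  haveI : Nonempty (Fin k) := ⟨⟨0, hk⟩⟩
  set F : Fin k → EuclideanSpace ℝ (Fin d) :=
    fun j => miniBatchUpdate B (Finset.univ.filter (fun l => p l = j)) (C j) with hF
  set m : Fin k → ℝ := fun j => ‖F j - C j‖ ^ 2 with hm
  set a : Fin k → ℝ :=
    fun j => Real.sqrt (((Finset.univ.filter (fun l => p l = j)).card : ℝ) / b) with ha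
  have hmnn : ∀ j, 0 ≤ m j := fun j => sq_nonneg _
  have hmove' : ε < ∑ j, m j := hmove
  -- cost formulas
  have hcost1 : kmCostTuple C B = (b:ℝ)⁻¹ * ∑ l, ‖B l - C (p l)‖ ^ 2 := by
    unfold kmCostTuple
    congr 1
    refine Finset.sum_congr rfl fun l _ => ?_
    unfold kmCost
    refine le_antisymm (ciInf_le (Set.finite_range _).bddBelow (p l))
      (le_ciInf fun j => pow_le_pow_left₀ (norm_nonneg _) (hp l j) 2)
  have hcost2 : kmCostTuple F B ≤ (b:ℝ)⁻¹ * ∑ l, ‖B l - F (p l)‖ ^ 2 := by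
    unfold kmCostTuple
    refine mul_le_mul_of_nonneg_left (Finset.sum_le_sum fun l _ => ?_) (by positivity)
    exact ciInf_le (Set.finite_range _).bddBelow (p l)
  -- per-cluster drop
  have hdrop : ∀ j : Fin k,
      (b:ℝ) * (a j * m j) ≤ ∑ l ∈ Finset.univ.filter (fun l => p l = j),
        (‖B l - C (p l)‖ ^ 2 - ‖B l - F (p l)‖ ^ 2) := by
    intro j
    have hsb : (Finset.univ.filter (fun l => p l = j)).card ≤ b := by
      simpa using Finset.card_le_card (Finset.filter_subset (fun l => p l = j) Finset.univ)
    refine le_trans (cluster_drop hb B _ hsb (C j)) (le_of_eq ?_)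
    refine Finset.sum_congr rfl fun l hl => ?_
    have hpl : p l = j := by simpa using hl
    rw [hpl]
  -- summed drop
  have hsummed : (b:ℝ) * ∑ j, a j * m j
      ≤ ∑ l, (‖B l - C (p l)‖ ^ 2 - ‖B l - F (p l)‖ ^ 2) := by
    rw [Finset.mul_sum, ← Finset.sum_fiberwise Finset.univ p
      (fun l => ‖B l - C (p l)‖ ^ 2 - ‖B l - F (p l)‖ ^ 2)]
    exact Finset.sum_le_sum fun j _ => hdrop j
  have hdelta : ∑ j, a j * m j ≤ kmCostTuple C B - kmCostTuple F B := by
    have h1 : kmCostTuple C B - kmCostTuple F B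
        ≥ (b:ℝ)⁻¹ * ∑ l, (‖B l - C (p l)‖ ^ 2 - ‖B l - F (p l)‖ ^ 2) := by
      rw [Finset.sum_sub_distrib, mul_sub, hcost1]
      exact sub_le_sub_left hcost2 _
    refine le_trans ?_ h1
    rw [← inv_mul_le_iff₀ (by positivity : (0:ℝ) < (b:ℝ)⁻¹), inv_inv]
    exact hsummed
  -- m j ≤ a j ^ 2 * d
  have hmd : ∀ j, m j ≤ a j ^ 2 * d := by
    intro j
    exact update_move_le hb B hB _ (C j) (hC j)
  -- a j * m j ≥ m j * sqrt (m j) / sqrt d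
  have hstep : ∀ j, m j * Real.sqrt (m j) ≤ Real.sqrt d * (a j * m j) := by
    intro j
    have h1 : Real.sqrt (m j) ≤ a j * Real.sqrt d := by
      have := Real.sqrt_le_sqrt (hmd j)
      rwa [Real.sqrt_mul (sq_nonneg _), Real.sqrt_sq (Real.sqrt_nonneg _)] at this
    calc m j * Real.sqrt (m j) ≤ m j * (a j * Real.sqrt d) :=
          mul_le_mul_of_nonneg_left h1 (hmnn j)
      _ = Real.sqrt d * (a j * m j) := by ring
  -- Jensen
  have hj : (∑ j, m j) ^ ((3:ℝ)/2) ≤ Real.sqrt k * ∑ j, m j * Real.sqrt (m j) :=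
    jensen_three_halves hk m hmnn
  -- finish
  have hkd : Real.sqrt ((k:ℝ) * d) = Real.sqrt k * Real.sqrt d :=
    Real.sqrt_mul (by positivity) _
  have hkdpos : (0:ℝ) < Real.sqrt ((k:ℝ) * d) := Real.sqrt_pos.2 (by positivity)
  rw [gt_iff_lt, div_lt_iff₀ hkdpos]
  calc ε ^ ((3:ℝ)/2) < (∑ j, m j) ^ ((3:ℝ)/2) :=
        Real.rpow_lt_rpow hε.le hmove' (by norm_num)
    _ ≤ Real.sqrt k * ∑ j, m j * Real.sqrt (m j) := hj
    _ ≤ Real.sqrt k * (Real.sqrt d * ∑ j, a j * m j) := by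
        refine mul_le_mul_of_nonneg_left ?_ (Real.sqrt_nonneg _)
        rw [Finset.mul_sum]
        exact Finset.sum_le_sum fun j _ => hstep j
    _ ≤ Real.sqrt k * (Real.sqrt d * (kmCostTuple C B - kmCostTuple F B)) := by
        refine mul_le_mul_of_nonneg_left
          (mul_le_mul_of_nonneg_left hdelta (Real.sqrt_nonneg _)) (Real.sqrt_nonneg _)
    _ = (kmCostTuple C B - kmCostTuple F B) * Real.sqrt ((k:ℝ) * d) := by
        rw [hkd]; ring
end
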